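/- Let 𝒳, 𝒜 be nonempty finite types, p_X a probability mass function on 𝒳, p a strictly positive channel from 𝒳 to 𝒜, and f : (0, ∞) → ℝ a differentiable convex function with f(1) = 0. If q* is a strictly positive probability mass function on 𝒜 minimizing q ↦ Σ_{x,a} p_X(x) q(a) f(p(a|x)/q(a)) over strictly positive probability mass functions q on 𝒜, then there exists λ ∈ ℝ such that for every a ∈ 𝒜: Σ_x p_X(x) [ f(p(a|x)/q*(a)) − (p(a|x)/q*(a)) · f'(p(a|x)/q*(a)) ] + λ = 0. -/

import Mathlib

open Finset Real

/-- A probability mass function on a finite type. -/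
def IsPMF {Z : Type*} [Fintype Z] (p : Z → ℝ) : Prop :=
  (∀ z, 0 ≤ p z) ∧ ∑ z, p z = 1

/-- A channel from `X` to `A`: a family of pmfs on `A` indexed by `X`. -/
def IsChannel {X A : Type*} [Fintype X] [Fintype A] (W : X → A → ℝ) : Prop :=
  ∀ x, IsPMF (W x)

/-- Expected loss `Σ_{x,a} p_X(x) p_{A|X}(a|x) ℓ(x,a)`. -/
noncomputable def expLoss {X A : Type*} [Fintype X] [Fintype A]
    (pX : X → ℝ) (ℓ : X → A → ℝ) (W : X → A → ℝ) : ℝ :=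
  ∑ x, ∑ a, pX x * W x a * ℓ x a

lemma deriv_aux (f f' : ℝ → ℝ) (hfderiv : ∀ t : ℝ, 0 < t → HasDerivAt f (f' t) t)
    (c v e : ℝ) (hc : 0 < c) (hv : 0 < v) :
    HasDerivAt (fun t : ℝ => (c + e * t) * f (v / (c + e * t)))
      (e * (f (v / c) - v / c * f' (v / c))) 0 := by
  have hu : HasDerivAt (fun t : ℝ => c + e * t) e 0 := by
    simpa using ((hasDerivAt_id (0:ℝ)).const_mul e).const_add c
  have h0 : c + e * (0:ℝ) = c := by ring
  have hinner : HasDerivAt (fun t : ℝ => v / (c + e * t)) (-(v * e) / c ^ 2) 0 := by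
    have := (hasDerivAt_const (0:ℝ) v).div hu (by rw [h0]; exact hc.ne')
    refine this.congr_deriv ?_
    rw [h0]; ring
  have hf0 : HasDerivAt f (f' (v / c)) ((fun t : ℝ => v / (c + e * t)) 0) := by
    simp only [h0]
    exact hfderiv _ (by positivity)
  have hcomp : HasDerivAt (fun t : ℝ => f (v / (c + e * t)))
      (f' (v / c) * (-(v * e) / c ^ 2)) 0 := by
    exact hf0.comp 0 hinner
  have := hu.mul hcomp
  refine this.congr_deriv ?_
  rw [h0]
  field_simp
  ring

theorem fLeakage_minimizer_KKT
    {X A : Type*} [Fintype X] [Fintype A] [Nonempty X] [Nonempty A]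
    (pX : X → ℝ) (hpX : IsPMF pX)
    (p : X → A → ℝ) (hp : IsChannel p) (hppos : ∀ x a, 0 < p x a)
    (f f' : ℝ → ℝ)
    (hfconv : ConvexOn ℝ (Set.Ioi (0 : ℝ)) f)
    (hfderiv : ∀ t : ℝ, 0 < t → HasDerivAt f (f' t) t)
    (hf1 : f 1 = 0)
    (qstar : A → ℝ) (hqstar : IsPMF qstar) (hqstarpos : ∀ a, 0 < qstar a)
    (hmin : ∀ q : A → ℝ, IsPMF q → (∀ a, 0 < q a) →
      (∑ x, ∑ a, pX x * qstar a * f (p x a / qstar a))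
        ≤ ∑ x, ∑ a, pX x * q a * f (p x a / q a)) :
    ∃ lam : ℝ, ∀ a : A,
      (∑ x, pX x * (f (p x a / qstar a) - p x a / qstar a * f' (p x a / qstar a))) + lam = 0 := by
  classical
  set g : A → ℝ := fun a =>
    ∑ x, pX x * (f (p x a / qstar a) - p x a / qstar a * f' (p x a / qstar a)) with hg
  have key : ∀ a b : A, g a = g b := by
    intro a b
    by_cases hab : a = b
    · rw [hab]
    set e : A → ℝ := fun a' => (if a' = a then (1:ℝ) else 0) - (if a' = b then (1:ℝ) else 0)
      with he
    set q : ℝ → A → ℝ := fun t a' => qstar a' + e a' * t with hq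
    set h : ℝ → ℝ := fun t => ∑ x, ∑ a', pX x * q t a' * f (p x a' / q t a') with hh
    obtain ⟨ε, hε, hεle⟩ : ∃ ε > 0, ∀ a', ε ≤ qstar a' := by
      refine ⟨Finset.univ.inf' Finset.univ_nonempty qstar, ?_, ?_⟩
      · exact (Finset.lt_inf'_iff _).mpr fun a' _ => hqstarpos a'
      · intro a'; exact Finset.inf'_le _ (Finset.mem_univ a')
    have habs : ∀ t a', |t| < ε → 0 < q t a' := by
      intro t a' ht
      have h1 : |e a' * t| ≤ |t| := by
        have he1 : |e a'| ≤ 1 := by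
          simp only [he]
          split_ifs <;> norm_num
        calc |e a' * t| = |e a'| * |t| := abs_mul _ _
          _ ≤ 1 * |t| := by nlinarith [abs_nonneg t]
          _ = |t| := one_mul _
      have h2 := neg_abs_le (e a' * t)
      have h3 := hεle a'
      simp only [hq]
      linarith
    have hsum : ∀ t, ∑ a', q t a' = 1 := by
      intro t
      simp only [hq, he, Finset.sum_add_distrib, sub_mul, ite_mul, one_mul,
        zero_mul, Finset.sum_sub_distrib, Finset.sum_ite_eq', Finset.mem_univ, if_true]
      rw [hqstar.2]
      ring
    have hq0 : ∀ a', q 0 a' = qstar a' := by intro a'; simp [hq]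
    have hloc : IsLocalMin h 0 := by
      have hball : Metric.ball (0:ℝ) ε ∈ nhds (0:ℝ) := Metric.ball_mem_nhds _ hε
      filter_upwards [hball] with t ht
      rw [Metric.mem_ball, Real.dist_eq, sub_zero] at ht
      have hpos := fun a' => habs t a' ht
      have hPMF : IsPMF (q t) := ⟨fun a' => (hpos a').le, hsum t⟩
      have hmt := hmin (q t) hPMF hpos
      simp only [hh]
      calc (∑ x, ∑ a', pX x * q 0 a' * f (p x a' / q 0 a'))
          = ∑ x, ∑ a', pX x * qstar a' * f (p x a' / qstar a') := by
            simp only [hq0]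
        _ ≤ _ := hmt
    set D : ℝ := ∑ x, ∑ a', pX x *
      (e a' * (f (p x a' / qstar a') - p x a' / qstar a' * f' (p x a' / qstar a'))) with hD
    have hderiv : HasDerivAt h D 0 := by
      apply HasDerivAt.fun_sum
      intro x _
      apply HasDerivAt.fun_sum
      intro a' _
      have haux := (deriv_aux f f' hfderiv (qstar a') (p x a') (e a')
        (hqstarpos a') (hppos x a')).const_mul (pX x)
      simp only [hq]
      convert haux using 2 with t
      rfl
      ring
    have hD0 : D = 0 := hloc.hasDerivAt_eq_zero hderiv
    have hDab : D = g a - g b := by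
      simp only [hD, hg, he, sub_mul, ite_mul, one_mul, zero_mul, mul_sub,
        mul_ite, mul_zero, Finset.sum_sub_distrib, Finset.sum_ite_eq',
        Finset.mem_univ, if_true]
      ring
    linarith
  refine ⟨-g (Classical.arbitrary A), fun a => ?_⟩
  have hk := key a (Classical.arbitrary A)
  simp only [hg] at hk ⊢
  linarith
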